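/- In the interlaced ortree, if both i and k are even, i < k, and node 2k is an ancestor of leaf 2i+1 with 2i+1 < 2k, then node 2k is an ancestor of node 2i+2, and the OR of leaf data over odd indices in (2i, 2k) of the original tree equals the OR, over odd indices t' in (i, k), of the data of internal nodes 2t' (i.e., the problem reduces to the same problem on the tree with indices halved). -/

import Mathlib

/-- `m` is an ortree ancestor of the index `t`. -/
def OrtreeAncestor (m t : ℕ) : Prop :=
  ∃ q s, 1 ≤ s ∧ m = q * 2 ^ (s + 1) + 2 ^ s ∧ m - 2 ^ s < t ∧ t < m + 2 ^ s

/-- Bitwise OR of `g` over all odd indices `t` with `lo < t < hi`. -/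
def ortreeOr (g : ℕ → ℕ) (lo hi : ℕ) : ℕ :=
  (((List.range hi).filter (fun t => decide (lo < t) && decide (t % 2 = 1))).map g).foldr
    (· ||| ·) 0


private lemma foldr_or_append (l1 l2 : List ℕ) :
    (l1 ++ l2).foldr (· ||| ·) 0 = l1.foldr (· ||| ·) 0 ||| l2.foldr (· ||| ·) 0 := by
  induction l1 with
  | nil => simp
  | cons x xs ih => simp [ih, Nat.or_assoc]

private lemma ortreeOr_succ (g : ℕ → ℕ) (lo n : ℕ) :
    ortreeOr g lo (n + 1) =
      ortreeOr g lo n ||| (if lo < n ∧ n % 2 = 1 then g n else 0) := by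
  unfold ortreeOr
  rw [List.range_succ, List.filter_append, List.map_append, foldr_or_append]
  congr 1
  by_cases h1 : lo < n <;> by_cases h2 : n % 2 = 1 <;>
    simp [List.filter, h1, h2]

private lemma ortreeOr_empty (g : ℕ → ℕ) (lo hi : ℕ) (h : hi ≤ lo) :
    ortreeOr g lo hi = 0 := by
  unfold ortreeOr
  have : (List.range hi).filter (fun t => decide (lo < t) && decide (t % 2 = 1)) = [] := by
    apply List.filter_eq_nil_iff.2
    intro t ht
    have := List.mem_range.1 ht
    simp only [Bool.and_eq_true, decide_eq_true_eq]
    omega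
  rw [this]; rfl

private lemma ortree_key (fill : ℕ → ℕ)
    (hinv : ∀ q s, 1 ≤ s →
      fill (q * 2 ^ (s + 1) + 2 ^ s) =
        ortreeOr fill (q * 2 ^ (s + 1)) ((q + 1) * 2 ^ (s + 1))) :
    ∀ d a, ortreeOr fill (4 * a) (4 * a + 4 * d) =
      ortreeOr (fun t' => fill (2 * t')) (2 * a) (2 * a + 2 * d) := by
  intro d
  induction d with
  | zero => intro a; simp [ortreeOr_empty]
  | succ d ih =>
    intro a
    have hfill : fill (4 * (a + d) + 2) = fill (4 * (a + d) + 1) ||| fill (4 * (a + d) + 3) := by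
      have h := hinv (a + d) 1 le_rfl
      have e1 : (a + d) * 2 ^ (1 + 1) + 2 ^ 1 = 4 * (a + d) + 2 := by ring
      have e2 : (a + d) * 2 ^ (1 + 1) = 4 * (a + d) := by ring
      have e3 : (a + d + 1) * 2 ^ (1 + 1) = (4 * (a + d) + 3) + 1 := by ring
      rw [e1, e2, e3] at h
      rw [h, ortreeOr_succ, show 4 * (a + d) + 3 = (4 * (a + d) + 2) + 1 by ring,
        ortreeOr_succ, show 4 * (a + d) + 2 = (4 * (a + d) + 1) + 1 by ring,
        ortreeOr_succ, show 4 * (a + d) + 1 = (4 * (a + d)) + 1 by ring,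
        ortreeOr_succ, ortreeOr_empty fill _ _ le_rfl]
      have c0 : ¬(4 * (a + d) < 4 * (a + d) ∧ 4 * (a + d) % 2 = 1) := by omega
      have c1 : (4 * (a + d) < 4 * (a + d) + 1 ∧ (4 * (a + d) + 1) % 2 = 1) := by omega
      have c2 : ¬(4 * (a + d) < 4 * (a + d) + 2 ∧ (4 * (a + d) + 2) % 2 = 1) := by omega
      have c3 : (4 * (a + d) < 4 * (a + d) + 3 ∧ (4 * (a + d) + 3) % 2 = 1) := by omega
      simp [c0, c1, c2, c3]
      rw [if_neg (by omega), Nat.or_zero]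
    rw [show 4 * a + 4 * (d + 1) = ((((4 * a + 4 * d) + 1) + 1) + 1) + 1 by ring,
      ortreeOr_succ, ortreeOr_succ, ortreeOr_succ, ortreeOr_succ,
      show 2 * a + 2 * (d + 1) = ((2 * a + 2 * d) + 1) + 1 by ring,
      ortreeOr_succ, ortreeOr_succ, ih a]
    have c0 : ¬(4 * a < 4 * a + 4 * d ∧ (4 * a + 4 * d) % 2 = 1) := by omega
    have c1 : (4 * a < 4 * a + 4 * d + 1 ∧ (4 * a + 4 * d + 1) % 2 = 1) := by omega
    have c2 : ¬(4 * a < 4 * a + 4 * d + 2 ∧ (4 * a + 4 * d + 2) % 2 = 1) := by omega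
    have c3 : (4 * a < 4 * a + 4 * d + 3 ∧ (4 * a + 4 * d + 3) % 2 = 1) := by omega
    have d0 : ¬(2 * a < 2 * a + 2 * d ∧ (2 * a + 2 * d) % 2 = 1) := by omega
    have d1 : (2 * a < 2 * a + 2 * d + 1 ∧ (2 * a + 2 * d + 1) % 2 = 1) := by omega
    simp only [c0, c1, c2, c3, d0, d1, if_true, if_false, if_pos, if_neg,
      Nat.or_zero]
    rw [show 2 * (2 * a + 2 * d + 1) = 4 * (a + d) + 2 by ring, hfill,
      show 4 * a + 4 * d + 1 = 4 * (a + d) + 1 by ring,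
      show 4 * a + 4 * d + 3 = 4 * (a + d) + 3 by ring, Nat.or_assoc]
    simp

/-- Third case of the recursion: if both `i` and `k` are even, `i < k`, and the
node `2k` is an ancestor of the leaf `2i+1` with `2i+1 < 2k`, then `2k` is an
ancestor of the node `2i+2`, and the OR of the leaf data over odd indices in
`(2i, 2k)` equals the OR over odd indices `t'` in `(i, k)` of the data of the
internal nodes `2t'`: the problem reduces to the halved-index tree. -/
theorem ortree_both_even_case (fill : ℕ → ℕ)
    (hinv : ∀ q s, 1 ≤ s →
      fill (q * 2 ^ (s + 1) + 2 ^ s) =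
        ortreeOr fill (q * 2 ^ (s + 1)) ((q + 1) * 2 ^ (s + 1)))
    (i k : ℕ) (hi : Even i) (hk : Even k) (hik : i < k)
    (hanc : OrtreeAncestor (2 * k) (2 * i + 1)) (hlt : 2 * i + 1 < 2 * k) :
    OrtreeAncestor (2 * k) (2 * i + 2) ∧
      ortreeOr fill (2 * i) (2 * k) = ortreeOr (fun t' => fill (2 * t')) i k := by
  obtain ⟨q, s, hs, hm, hl, hr⟩ := hanc
  constructor
  · exact ⟨q, s, hs, hm, by omega, by have := Nat.one_le_two_pow (n := s); omega⟩
  · obtain ⟨a, ha⟩ := hi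
    obtain ⟨b, hb⟩ := hk
    have key := ortree_key fill hinv (b - a) a
    rw [show 2 * i = 4 * a by omega, show 2 * k = 4 * a + 4 * (b - a) by omega,
      show i = 2 * a by omega]
    rw [show k = 2 * a + 2 * (b - a) by omega]
    exact key
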